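/- Let L be a lattice with a ℤ-action as above and X the quotient graph on L/ℤ. Then X satisfies the triangle condition: for every n ≥ 2 and vertices x, y, z ∈ X with d(x,y) = d(x,z) = n and d(y,z) = 1, there exists a vertex u ∈ X with d(u,y) = d(u,z) = 1 and d(x,u) = n - 1. -/

import Mathlib

open SimpleGraph

/-- The orbit relation of the `ℤ`-action on `L` generated by the order
automorphism `T` (the action of `n` is `T ^ n`, written `x + n` in the paper). -/
def zOrbitRel {L : Type*} [Lattice L] (T : L ≃o L) (x y : L) : Prop :=
  ∃ k : ℤ, (T ^ k) x = y

/-- The graph `X` on the quotient `L/ℤ`, with an edge between two distinct classes `x, y`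
whenever some representatives satisfy `x₀ ≤ y₀ ≤ x₀ + 1`. -/
def quotGraph {L : Type*} [Lattice L] (T : L ≃o L) : SimpleGraph (Quot (zOrbitRel T)) where
  Adj x y := x ≠ y ∧ ∃ x₀ y₀ : L, Quot.mk _ x₀ = x ∧ Quot.mk _ y₀ = y ∧
    x₀ ≤ y₀ ∧ y₀ ≤ T x₀
  symm := ⟨by
    rintro x y ⟨hne, x₀, y₀, hx, hy, h1, h2⟩
    refine ⟨hne.symm, y₀, T x₀, hy, ?_, h2, T.monotone h1⟩
    rw [← hx]
    exact (Quot.sound ⟨(1 : ℤ), by simp⟩).symm⟩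
  loopless := ⟨by rintro x ⟨hne, -⟩; exact hne rfl⟩

section Aux

variable {L : Type*} [Lattice L] (T : L ≃o L)

lemma zpow_apply_add (a b : ℤ) (x : L) : (T ^ a) ((T ^ b) x) = (T ^ (a + b)) x := by
  rw [zpow_add]; rfl

lemma T_eq_zpow_one (x : L) : T x = (T ^ (1 : ℤ)) x := by simp

lemma T_zpow_neg_one_apply (x : L) : T ((T ^ (-1 : ℤ)) x) = x := by
  rw [T_eq_zpow_one T ((T ^ (-1:ℤ)) x), zpow_apply_add]; simp

lemma T_zpow_neg_one_T (x : L) : (T ^ (-1 : ℤ)) (T x) = x := by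
  rw [T_eq_zpow_one T x, zpow_apply_add]; simp

lemma zOrbit_equiv : Equivalence (zOrbitRel T) where
  refl x := ⟨0, by simp⟩
  symm := by rintro x y ⟨k, rfl⟩; exact ⟨-k, by rw [zpow_apply_add]; simp⟩
  trans := by rintro x y z ⟨k, rfl⟩ ⟨l, rfl⟩; exact ⟨l + k, (zpow_apply_add ..).symm⟩

lemma quotmk_eq_iff {a b : L} :
    Quot.mk (zOrbitRel T) a = Quot.mk (zOrbitRel T) b ↔ zOrbitRel T a b :=
  ⟨fun h => (Equivalence.eqvGen_iff (zOrbit_equiv T)).mp (Quot.eqvGen_exact h), Quot.sound⟩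

lemma lt_pow_nat (hinc : ∀ x : L, x < T x) (m : ℕ) (x : L) :
    x < (T ^ ((m + 1 : ℕ) : ℤ)) x := by
  induction m with
  | zero => simpa using hinc x
  | succ m ih =>
    calc x < (T ^ ((m + 1 : ℕ) : ℤ)) x := ih
    _ < T ((T ^ ((m + 1 : ℕ) : ℤ)) x) := hinc _
    _ = (T ^ ((m + 1 + 1 : ℕ) : ℤ)) x := by
        rw [T_eq_zpow_one T ((T ^ ((m+1:ℕ):ℤ)) x), zpow_apply_add]
        push_cast; ring_nf

lemma lt_zpow_self (hinc : ∀ x : L, x < T x) {a : ℤ} (ha : 1 ≤ a) (x : L) :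
    x < (T ^ a) x := by
  obtain ⟨m, rfl⟩ : ∃ m : ℕ, a = ((m + 1 : ℕ) : ℤ) := ⟨(a - 1).toNat, by omega⟩
  exact lt_pow_nat T hinc m x

lemma tzpow_le (hinc : ∀ x : L, x < T x) {a b : ℤ} (h : a ≤ b) (x : L) :
    (T ^ a) x ≤ (T ^ b) x := by
  rcases eq_or_lt_of_le h with rfl | h
  · exact le_rfl
  · have h1 : x < (T ^ (b - a)) x := lt_zpow_self T hinc (by omega) x
    have := ((T ^ a : L ≃o L).strictMono h1).le
    rwa [zpow_apply_add, add_sub_cancel] at this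

lemma tzpow_lt (hinc : ∀ x : L, x < T x) {a b : ℤ} (h : a < b) (x : L) :
    (T ^ a) x < (T ^ b) x := by
  have h1 : x < (T ^ (b - a)) x := lt_zpow_self T hinc (by omega) x
  have := (T ^ a : L ≃o L).strictMono h1
  rwa [zpow_apply_add, add_sub_cancel] at this

lemma walk_chain {X Y : Quot (zOrbitRel T)} (p : (quotGraph T).Walk X Y) :
    ∀ x₀ : L, Quot.mk _ x₀ = X →
      ∃ y₀ : L, Quot.mk _ y₀ = Y ∧ x₀ ≤ y₀ ∧ y₀ ≤ (T ^ (p.length : ℤ)) x₀ := by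
  induction p with
  | nil => intro x₀ h; exact ⟨x₀, h, le_rfl, by simp⟩
  | @cons X V Y h p ih =>
    intro x₀ hx
    obtain ⟨hne, a, b, ha, hb, h1, h2⟩ := h
    obtain ⟨k, hk⟩ := (quotmk_eq_iff T).mp (ha.trans hx.symm)
    have hb' : Quot.mk (zOrbitRel T) ((T ^ k) b) = V :=
      ((Quot.sound ⟨k, rfl⟩).symm.trans hb)
    have h1' : x₀ ≤ (T ^ k) b := hk ▸ (T ^ k : L ≃o L).monotone h1
    have h2' : (T ^ k) b ≤ T x₀ := by
      have h3 := (T ^ k : L ≃o L).monotone h2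
      have e : (T ^ k) (T a) = T ((T ^ k) a) := by
        rw [T_eq_zpow_one T a, zpow_apply_add, T_eq_zpow_one T ((T^k) a),
          zpow_apply_add, add_comm]
      rwa [e, hk] at h3
    obtain ⟨y₀, hy, hle1, hle2⟩ := ih ((T ^ k) b) hb'
    refine ⟨y₀, hy, h1'.trans hle1, ?_⟩
    show y₀ ≤ (T ^ ((p.length + 1 : ℕ) : ℤ)) x₀
    calc y₀ ≤ (T ^ (p.length : ℤ)) ((T ^ k) b) := hle2
    _ ≤ (T ^ (p.length : ℤ)) (T x₀) := (T ^ (p.length : ℤ) : L ≃o L).monotone h2'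
    _ = (T ^ ((p.length + 1 : ℕ) : ℤ)) x₀ := by
        rw [T_eq_zpow_one T x₀, zpow_apply_add]
        push_cast; ring_nf

lemma chain_walk (hinc : ∀ x : L, x < T x) (m : ℕ) :
    ∀ x₀ y₀ : L, x₀ ≤ y₀ → y₀ ≤ (T ^ (m : ℤ)) x₀ →
      ∃ p : (quotGraph T).Walk (Quot.mk _ x₀) (Quot.mk _ y₀), p.length ≤ m := by
  induction m with
  | zero =>
    intro x₀ y₀ h1 h2
    simp only [Nat.cast_zero, zpow_zero] at h2
    have : x₀ = y₀ := le_antisymm h1 (by simpa using h2)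
    subst this
    exact ⟨SimpleGraph.Walk.nil, by simp⟩
  | succ m ih =>
    intro x₀ y₀ h1 h2
    set v := y₀ ⊓ (T ^ (m : ℤ)) x₀ with hv
    have hxv : x₀ ≤ v := le_inf h1 (by
      simpa using tzpow_le T hinc (by positivity : (0:ℤ) ≤ (m:ℤ)) x₀)
    obtain ⟨p, hp⟩ := ih x₀ v hxv inf_le_right
    have hv1 : v ≤ y₀ := inf_le_left
    have hv2 : y₀ ≤ T v := by
      have e : T v = (T ^ ((1:ℤ) + m)) x₀ ⊓ T y₀ := by
        rw [hv, inf_comm, map_inf, T_eq_zpow_one T ((T ^ (m:ℤ)) x₀), zpow_apply_add]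
      rw [e]
      refine le_inf ?_ (hinc y₀).le
      calc y₀ ≤ (T ^ ((m + 1 : ℕ) : ℤ)) x₀ := h2
      _ = (T ^ ((1:ℤ) + m)) x₀ := by push_cast; ring_nf
    by_cases he : Quot.mk (zOrbitRel T) v = Quot.mk (zOrbitRel T) y₀
    · exact ⟨p.copy rfl he, by simp; omega⟩
    · refine ⟨p.concat ⟨he, v, y₀, rfl, rfl, hv1, hv2⟩, ?_⟩
      exact (SimpleGraph.Walk.length_concat _ _).trans_le (by omega)

lemma dist_tri {V : Type*} {G : SimpleGraph V} {a b c : V}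
    (h1 : G.Reachable a b) (h2 : G.Reachable b c) :
    G.dist a c ≤ G.dist a b + G.dist b c := by
  obtain ⟨p, hp⟩ := h1.exists_walk_length_eq_dist
  obtain ⟨q, hq⟩ := h2.exists_walk_length_eq_dist
  rw [← hp, ← hq, ← SimpleGraph.Walk.length_append]
  exact SimpleGraph.dist_le _

lemma assemble {x y z : Quot (zOrbitRel T)} {n : ℕ} (hn : 2 ≤ n)
    (hxy : (quotGraph T).dist x y = n) (hxz : (quotGraph T).dist x z = n) (u₀ : L)
    (hry : (quotGraph T).Reachable (Quot.mk _ u₀) y)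
    (hrz : (quotGraph T).Reachable (Quot.mk _ u₀) z)
    (hrx : (quotGraph T).Reachable x (Quot.mk _ u₀))
    (hdy : (quotGraph T).dist (Quot.mk _ u₀) y ≤ 1)
    (hdz : (quotGraph T).dist (Quot.mk _ u₀) z ≤ 1)
    (hdx : (quotGraph T).dist x (Quot.mk _ u₀) ≤ n - 1) :
    ∃ u : Quot (zOrbitRel T), (quotGraph T).dist u y = 1 ∧ (quotGraph T).dist u z = 1 ∧
      (quotGraph T).dist x u = n - 1 := by
  set u := Quot.mk (zOrbitRel T) u₀ with hu
  have htri : (quotGraph T).dist x y ≤ (quotGraph T).dist x u + (quotGraph T).dist u y :=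
    dist_tri hrx hry
  have hxu : (quotGraph T).dist x u = n - 1 := by omega
  refine ⟨u, ?_, ?_, hxu⟩
  · rcases Nat.le_one_iff_eq_zero_or_eq_one.mp hdy with h0 | h1
    · have he : u = y := hry.dist_eq_zero_iff.mp h0
      rw [← he] at hxy
      omega
    · exact h1
  · rcases Nat.le_one_iff_eq_zero_or_eq_one.mp hdz with h0 | h1
    · have he : u = z := hrz.dist_eq_zero_iff.mp h0
      rw [← he] at hxz
      omega
    · exact h1

end Aux

/-- Lemma 2.3. The quotient graph `X = L/ℤ` satisfies the triangle
condition: for every `n ≥ 2` and vertices `x, y, z` with `d(x,y) = d(x,z) = n` and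
`d(y,z) = 1`, there is a vertex `u` with `d(u,y) = d(u,z) = 1` and `d(x,u) = n - 1`. -/
theorem quotGraph_triangle_condition {L : Type*} [Lattice L] (T : L ≃o L)
    (hjoin : ∀ S : Set L, S.Nonempty → BddAbove S → ∃ j, IsLUB S j)
    (hinc : ∀ x : L, x < T x)
    (hcof : ∀ x y : L, ∃ k : ℕ, (T ^ (k : ℤ))⁻¹ x ≤ y ∧ y ≤ (T ^ (k : ℤ)) x)
    (n : ℕ) (hn : 2 ≤ n) (x y z : Quot (zOrbitRel T))
    (hxy : (quotGraph T).dist x y = n) (hxz : (quotGraph T).dist x z = n)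
    (hyz : (quotGraph T).dist y z = 1) :
    ∃ u : Quot (zOrbitRel T), (quotGraph T).dist u y = 1 ∧ (quotGraph T).dist u z = 1 ∧
      (quotGraph T).dist x u = n - 1 := by
  clear hjoin hcof
  have hrxy : (quotGraph T).Reachable x y := Reachable.of_dist_ne_zero (by omega)
  have hrxz : (quotGraph T).Reachable x z := Reachable.of_dist_ne_zero (by omega)
  obtain ⟨x₀, hx₀⟩ := Quot.exists_rep x
  obtain ⟨p, hp⟩ := hrxy.exists_walk_length_eq_dist
  obtain ⟨y₀, hy₀, hxy1, hxy2⟩ := walk_chain T p x₀ hx₀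
  rw [hp, hxy] at hxy2
  obtain ⟨q, hq⟩ := hrxz.exists_walk_length_eq_dist
  obtain ⟨z₁, hz₁, hxz1, hxz2⟩ := walk_chain T q x₀ hx₀
  rw [hq, hxz] at hxz2
  obtain ⟨hyzne, a, b, ha, hb, hab1, hab2⟩ := dist_eq_one_iff_adj.mp hyz
  obtain ⟨k, hk⟩ := (quotmk_eq_iff T).mp (ha.trans hy₀.symm)
  have hz₀ : Quot.mk (zOrbitRel T) ((T ^ k) b) = z := (Quot.sound ⟨k, rfl⟩).symm.trans hb
  have hyz1 : y₀ ≤ (T ^ k) b := hk ▸ (T ^ k : L ≃o L).monotone hab1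
  have hyz2 : (T ^ k) b ≤ T y₀ := by
    have h3 := (T ^ k : L ≃o L).monotone hab2
    have e : (T ^ k) (T a) = T ((T ^ k) a) := by
      rw [T_eq_zpow_one T a, zpow_apply_add, T_eq_zpow_one T ((T^k) a),
        zpow_apply_add, add_comm]
    rwa [e, hk] at h3
  obtain ⟨z₀, hzdef⟩ : ∃ w : L, (T ^ k) b = w := ⟨_, rfl⟩
  rw [hzdef] at hz₀ hyz1 hyz2
  obtain ⟨c, hc⟩ := (quotmk_eq_iff T).mp (hz₀.trans hz₁.symm)
  -- minimality of n
  have hmin : ∀ (j : ℤ) (y' : L) (m : ℕ), Quot.mk (zOrbitRel T) y' = y → m < n →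
      (T ^ j) x₀ ≤ y' → y' ≤ (T ^ (m : ℤ)) ((T ^ j) x₀) → False := by
    intro j y' m hy' hm hle1 hle2
    obtain ⟨w, hw⟩ := chain_walk T hinc m _ _ hle1 hle2
    have hxj : Quot.mk (zOrbitRel T) ((T ^ j) x₀) = x := (Quot.sound ⟨j, rfl⟩).symm.trans hx₀
    have hd : (quotGraph T).dist (Quot.mk (zOrbitRel T) ((T ^ j) x₀))
        (Quot.mk (zOrbitRel T) y') ≤ m := le_trans (SimpleGraph.dist_le w) hw
    rw [hxj, hy'] at hd
    omega
  have hinvc : (T ^ (-c)) z₁ = z₀ := by rw [← hc, zpow_apply_add]; simp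
  have hcge : -1 ≤ c := by
    by_contra hlt
    push_neg at hlt
    have h1 : (T ^ (-c)) x₀ ≤ z₀ := by
      have h2 := (T ^ (-c) : L ≃o L).monotone hxz1
      rwa [hinvc] at h2
    have h2 : (T ^ (-c - 1)) x₀ ≤ y₀ := by
      have h3 := (T ^ (-1:ℤ) : L ≃o L).monotone (h1.trans hyz2)
      have e : (T ^ (-1:ℤ)) ((T ^ (-c)) x₀) = (T ^ (-c - 1)) x₀ := by
        rw [zpow_apply_add, (show (-1:ℤ) + -c = -c - 1 by ring)]
      rwa [e, T_zpow_neg_one_T] at h3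
    rcases le_or_gt (-c - 1) (n:ℤ) with hcn | hcn
    · refine hmin (-c-1) y₀ ((n:ℤ) - (-c-1)).toNat hy₀ (by omega) h2 ?_
      rw [zpow_apply_add, (show ((((n:ℤ) - (-c-1)).toNat : ℤ)) + (-c-1) = (n:ℤ) by omega)]
      exact hxy2
    · exact absurd (lt_of_le_of_lt (h2.trans hxy2) (tzpow_lt T hinc hcn x₀)) (lt_irrefl _)
  have hcle : c ≤ 0 := by
    by_contra hgt
    push_neg at hgt
    have h1 : z₀ ≤ (T ^ ((n:ℤ) - c)) x₀ := by
      have h2 := (T ^ (-c) : L ≃o L).monotone hxz2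
      have e : (T ^ (-c)) ((T ^ (n:ℤ)) x₀) = (T ^ ((n:ℤ) - c)) x₀ := by
        rw [zpow_apply_add, (show -c + (n:ℤ) = (n:ℤ) - c by ring)]
      rwa [hinvc, e] at h2
    refine hmin 0 y₀ (n-1) hy₀ (by omega) (by simpa using hxy1) ?_
    have h3 : y₀ ≤ (T ^ ((n:ℤ) - 1)) x₀ :=
      (hyz1.trans h1).trans (tzpow_le T hinc (by omega) x₀)
    rw [(show ((T ^ (0:ℤ)) x₀) = x₀ by simp), (show (((n-1:ℕ)):ℤ) = (n:ℤ)-1 by omega)]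
    exact h3
  have hcc : c = 0 ∨ c = -1 := by omega
  rcases hcc with hc0 | hcm1
  · -- c = 0 : z₁ = z₀
    have hzz : z₁ = z₀ := by rw [← hc, hc0]; simp
    rw [hzz] at hxz1 hxz2
    set u₀ := x₀ ⊔ (T ^ (-1:ℤ)) z₀ with hu
    have huy1 : u₀ ≤ y₀ := sup_le hxy1 (by
      have h3 := (T ^ (-1:ℤ) : L ≃o L).monotone hyz2
      rwa [T_zpow_neg_one_T] at h3)
    have huy2 : y₀ ≤ (T ^ ((1:ℕ):ℤ)) u₀ := by
      have h3 : y₀ ≤ T u₀ := by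
        calc y₀ ≤ z₀ := hyz1
        _ = T ((T ^ (-1:ℤ)) z₀) := (T_zpow_neg_one_apply T z₀).symm
        _ ≤ T u₀ := T.monotone le_sup_right
      simpa using h3
    have huz1 : u₀ ≤ z₀ := sup_le hxz1 (by
      have h3 := tzpow_lt T hinc (show (-1:ℤ) < 0 by norm_num) z₀
      simpa using h3.le)
    have huz2 : z₀ ≤ (T ^ ((1:ℕ):ℤ)) u₀ := by
      have h3 : z₀ ≤ T u₀ := by
        calc z₀ = T ((T ^ (-1:ℤ)) z₀) := (T_zpow_neg_one_apply T z₀).symm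
        _ ≤ T u₀ := T.monotone le_sup_right
      simpa using h3
    have hxu1 : x₀ ≤ u₀ := le_sup_left
    have hxu2 : u₀ ≤ (T ^ (((n-1:ℕ)):ℤ)) x₀ := by
      rw [(show (((n-1:ℕ)):ℤ) = (n:ℤ)-1 by omega)]
      refine sup_le ?_ ?_
      · have h3 := tzpow_le T hinc (show (0:ℤ) ≤ (n:ℤ)-1 by omega) x₀
        simpa using h3
      · have h4 := (T ^ (-1:ℤ) : L ≃o L).monotone hxz2
        have e : (T ^ (-1:ℤ)) ((T ^ (n:ℤ)) x₀) = (T ^ ((n:ℤ) - 1)) x₀ := by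
          rw [zpow_apply_add, (show (-1:ℤ) + (n:ℤ) = (n:ℤ) - 1 by ring)]
        rwa [e] at h4
    obtain ⟨w1, hw1⟩ := chain_walk T hinc 1 u₀ y₀ huy1 huy2
    obtain ⟨w2, hw2⟩ := chain_walk T hinc 1 u₀ z₀ huz1 huz2
    obtain ⟨w3, hw3⟩ := chain_walk T hinc (n-1) x₀ u₀ hxu1 hxu2
    have hr1 : (quotGraph T).Reachable (Quot.mk _ u₀) y := by rw [← hy₀]; exact ⟨w1⟩
    have hr2 : (quotGraph T).Reachable (Quot.mk _ u₀) z := by rw [← hz₀]; exact ⟨w2⟩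
    have hr3 : (quotGraph T).Reachable x (Quot.mk _ u₀) := by rw [← hx₀]; exact ⟨w3⟩
    have hd1 : (quotGraph T).dist (Quot.mk _ u₀) y ≤ 1 := by
      rw [← hy₀]; exact le_trans (SimpleGraph.dist_le w1) hw1
    have hd2 : (quotGraph T).dist (Quot.mk _ u₀) z ≤ 1 := by
      rw [← hz₀]; exact le_trans (SimpleGraph.dist_le w2) hw2
    have hd3 : (quotGraph T).dist x (Quot.mk _ u₀) ≤ n - 1 := by
      rw [← hx₀]; exact le_trans (SimpleGraph.dist_le w3) hw3
    exact assemble T hn hxy hxz u₀ hr1 hr2 hr3 hd1 hd2 hd3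
  · -- c = -1
    have hzz : (T ^ (-1:ℤ)) z₀ = z₁ := by rw [← hc, hcm1]
    rw [← hzz] at hxz1 hxz2
    have hA : T x₀ ≤ z₀ := by
      have h3 := T.monotone hxz1
      rwa [T_zpow_neg_one_apply] at h3
    set u₀ := (T ^ (n:ℤ)) x₀ ⊓ z₀ with hu
    have huy1 : y₀ ≤ u₀ := le_inf hxy2 hyz1
    have huy2 : u₀ ≤ (T ^ ((1:ℕ):ℤ)) y₀ := by
      have h3 : u₀ ≤ T y₀ := inf_le_right.trans hyz2
      simpa using h3
    have huz1 : u₀ ≤ z₀ := inf_le_right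
    have huz2 : z₀ ≤ (T ^ ((1:ℕ):ℤ)) u₀ := by
      have h4 : (T ^ (-1:ℤ)) z₀ ≤ u₀ := le_inf hxz2 (by
        have h5 := tzpow_lt T hinc (show (-1:ℤ) < 0 by norm_num) z₀
        simpa using h5.le)
      have h3 : z₀ ≤ T u₀ := by
        calc z₀ = T ((T ^ (-1:ℤ)) z₀) := (T_zpow_neg_one_apply T z₀).symm
        _ ≤ T u₀ := T.monotone h4
      simpa using h3
    have hxu1 : T x₀ ≤ u₀ := le_inf (by
      have h3 := tzpow_le T hinc (show (1:ℤ) ≤ (n:ℤ) by omega) x₀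
      simpa using h3) hA
    have hxu2 : u₀ ≤ (T ^ (((n-1:ℕ)):ℤ)) (T x₀) := by
      rw [T_eq_zpow_one T x₀, zpow_apply_add,
        (show (((n-1:ℕ)):ℤ) + 1 = (n:ℤ) by omega)]
      exact inf_le_left
    obtain ⟨w1, hw1⟩ := chain_walk T hinc 1 y₀ u₀ huy1 huy2
    obtain ⟨w2, hw2⟩ := chain_walk T hinc 1 u₀ z₀ huz1 huz2
    obtain ⟨w3, hw3⟩ := chain_walk T hinc (n-1) (T x₀) u₀ hxu1 hxu2
    have hTx : Quot.mk (zOrbitRel T) (T x₀) = x :=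
      (Quot.sound ⟨(1:ℤ), by simp⟩).symm.trans hx₀
    have hr1 : (quotGraph T).Reachable (Quot.mk _ u₀) y := by
      rw [← hy₀]; exact ⟨w1.reverse⟩
    have hr2 : (quotGraph T).Reachable (Quot.mk _ u₀) z := by rw [← hz₀]; exact ⟨w2⟩
    have hr3 : (quotGraph T).Reachable x (Quot.mk _ u₀) := by rw [← hTx]; exact ⟨w3⟩
    have hd1 : (quotGraph T).dist (Quot.mk _ u₀) y ≤ 1 := by
      rw [← hy₀, SimpleGraph.dist_comm]; exact le_trans (SimpleGraph.dist_le w1) hw1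
    have hd2 : (quotGraph T).dist (Quot.mk _ u₀) z ≤ 1 := by
      rw [← hz₀]; exact le_trans (SimpleGraph.dist_le w2) hw2
    have hd3 : (quotGraph T).dist x (Quot.mk _ u₀) ≤ n - 1 := by
      rw [← hTx]; exact le_trans (SimpleGraph.dist_le w3) hw3
    exact assemble T hn hxy hxz u₀ hr1 hr2 hr3 hd1 hd2 hd3
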